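/- Let q_0 = (β_0, α_0) be an initial ERC20 state: there is a designated account a_1 (the deployer's) with β_0(a_1) = B > 0, β_0(a) = 0 for every account a ≠ a_1, and α_0(a, p) = 0 for all a and p. Then for every 1 ≤ k ≤ n there exists a sequence of k − 1 approve invocations by the owner p_1 = ω(a_1) whose sequential execution from q_0 ends in a state q with q ∈ S_k and q ∈ Q_k. In particular, for every 1 ≤ k ≤ n the sets S_k and Q_k are nonempty. -/

import Mathlib

/-- A token state: balances and allowances. -/
structure TokenState (A P : Type*) where
  bal : A → ℕ
  alw : A × P → ℕ

variable {A P : Type*} [DecidableEq A] [DecidableEq P] [Fintype A] [Fintype P]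

/-- The set of enabled spenders of account `a` in state `q`. -/
def spenders (ω : A ≃ P) (q : TokenState A P) (a : A) : Finset P :=
  if q.bal a = 0 then {ω a}
  else Finset.univ.filter fun p => p = ω a ∨ 0 < q.alw (a, p)

/-- The maximum, over all accounts, of the number of enabled spenders. -/
def maxSpenders (ω : A ≃ P) (q : TokenState A P) : ℕ :=
  Finset.univ.sup fun a => (spenders ω q a).card

/-- `Qset ω k` is the set of token states whose maximal number of enabled
spenders for a single account equals `k`. -/
def Qset (ω : A ≃ P) (k : ℕ) : Set (TokenState A P) :=
  {q | maxSpenders ω q = k}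

/-- `transfer(a_d, v)` invoked by process `p`. Returns the new state and the response. -/
def transferOp (ω : A ≃ P) (p : P) (ad : A) (v : ℕ) (q : TokenState A P) :
    TokenState A P × Bool :=
  if v ≤ q.bal (ω.symm p) then
    (⟨Function.update (Function.update q.bal (ω.symm p) (q.bal (ω.symm p) - v)) ad
        (Function.update q.bal (ω.symm p) (q.bal (ω.symm p) - v) ad + v), q.alw⟩, true)
  else (q, false)

/-- `transferFrom(a_s, a_d, v)` invoked by process `p`. -/
def transferFromOp (p : P) (asrc ad : A) (v : ℕ) (q : TokenState A P) :
    TokenState A P × Bool :=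
  if v ≤ q.bal asrc ∧ v ≤ q.alw (asrc, p) then
    (⟨Function.update (Function.update q.bal asrc (q.bal asrc - v)) ad
        (Function.update q.bal asrc (q.bal asrc - v) ad + v),
      Function.update q.alw (asrc, p) (q.alw (asrc, p) - v)⟩, true)
  else (q, false)

/-- `approve(p̄, v)` invoked by process `p`: always succeeds and sets `α(a_p, p̄) := v`. -/
def approveOp (ω : A ≃ P) (p pbar : P) (v : ℕ) (q : TokenState A P) :
    TokenState A P × Bool :=
  (⟨q.bal, Function.update q.alw (ω.symm p, pbar) v⟩, true)

/-- The `uniquetransfer(a, q)` predicate: `β(a) > 0` and either `a` has at most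
two enabled spenders, or the allowances of any two distinct non-owner enabled
spenders sum to more than the balance of `a`. -/
def uniquetransfer (ω : A ≃ P) (a : A) (q : TokenState A P) : Prop :=
  0 < q.bal a ∧
    ((spenders ω q a).card ≤ 2 ∨
      ∀ p ∈ spenders ω q a \ {ω a}, ∀ p' ∈ spenders ω q a \ {ω a}, p ≠ p' →
        q.bal a < q.alw (a, p) + q.alw (a, p'))

/-- `Sset ω k`: the set of `k`-synchronization states, i.e. states `q` such
that some account `a` has exactly `k` enabled spenders and `uniquetransfer(a, q)`
holds. -/
def Sset (ω : A ≃ P) (k : ℕ) : Set (TokenState A P) :=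
  {q | ∃ a : A, (spenders ω q a).card = k ∧ uniquetransfer ω a q}

/-- from an initial ERC20 state (the deployer's account `a_1`
holds all the positive supply, every other balance is `0` and every allowance
is `0`), for every `1 ≤ k ≤ n` there is a sequence of `k - 1` `approve`
invocations by the owner `p_1 = ω(a_1)` whose sequential execution ends in a
state belonging to `S_k` and to `Q_k`; in particular `S_k` and `Q_k` are
nonempty. -/
lemma fold_approve (ω : A ≃ P) (a1 : A) (B : ℕ) (L : List P) (s : TokenState A P) :
    ((L.map (·, B)).foldl (fun s pv => (approveOp ω (ω a1) pv.1 pv.2 s).1) s).bal = s.bal ∧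
    ∀ x : A × P,
      ((L.map (·, B)).foldl (fun s pv => (approveOp ω (ω a1) pv.1 pv.2 s).1) s).alw x =
        if x.1 = a1 ∧ x.2 ∈ L then B else s.alw x := by
  induction L generalizing s with
  | nil => simp
  | cons p L ih =>
    simp only [List.map_cons, List.foldl_cons]
    refine ⟨(ih _).1, fun x => ?_⟩
    rw [(ih _).2 x]
    by_cases h : x.1 = a1 ∧ x.2 ∈ L
    · simp [h, h.1, h.2]
    · simp only [approveOp, Equiv.symm_apply_apply, if_neg h]
      by_cases h2 : x = (a1, p)
      · subst h2; simp
      · rw [Function.update_of_ne h2]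
        have : ¬ (x.1 = a1 ∧ x.2 ∈ p :: L) := by
          rintro ⟨h1, hm⟩
          rcases List.mem_cons.1 hm with hm | hm
          · exact h2 (Prod.ext h1 hm)
          · exact h ⟨h1, hm⟩
        rw [if_neg this]

theorem stmt8 (n : ℕ) (hn : 1 ≤ n)
    (hcA : Fintype.card A = n) (hcP : Fintype.card P = n) (ω : A ≃ P)
    (a1 : A) (B : ℕ) (hB : 0 < B)
    (q0 : TokenState A P)
    (hbal1 : q0.bal a1 = B) (hbal0 : ∀ a : A, a ≠ a1 → q0.bal a = 0)
    (halw0 : ∀ x : A × P, q0.alw x = 0) :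
    ∀ k : ℕ, 1 ≤ k → k ≤ n →
      (∃ ℓ : List (P × ℕ), ℓ.length = k - 1 ∧
        ℓ.foldl (fun s pv => (approveOp ω (ω a1) pv.1 pv.2 s).1) q0
          ∈ Sset ω k ∩ Qset ω k) ∧
      (Sset (A := A) (P := P) ω k).Nonempty ∧
      (Qset (A := A) (P := P) ω k).Nonempty := by
  intro k hk1 hkn
  -- choose k-1 processes different from ω a1
  obtain ⟨T, hTsub, hTcard⟩ := Finset.exists_subset_card_eq
    (s := Finset.univ.erase (ω a1)) (n := k - 1) (by
      rw [Finset.card_erase_of_mem (Finset.mem_univ _), Finset.card_univ, hcP]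
      omega)
  have hT1 : ω a1 ∉ T := fun h => (Finset.mem_erase.1 (hTsub h)).1 rfl
  set L : List P := T.toList with hL
  set ℓ : List (P × ℕ) := L.map (·, B) with hℓ
  set q : TokenState A P :=
    ℓ.foldl (fun s pv => (approveOp ω (ω a1) pv.1 pv.2 s).1) q0 with hq
  obtain ⟨hqbal, hqalw⟩ := fold_approve ω a1 B L q0
  have hqbal' : q.bal = q0.bal := hqbal
  have halw : ∀ p : P, q.alw (a1, p) = if p ∈ T then B else 0 := by
    intro p
    rw [hqalw (a1, p)]
    by_cases hp : p ∈ T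
    · simp [hL, hp, Finset.mem_toList]
    · simp [hL, hp, Finset.mem_toList, halw0]
  have hba1 : q.bal a1 = B := by rw [hqbal']; exact hbal1
  have hsp1 : spenders ω q a1 = insert (ω a1) T := by
    ext p
    simp only [spenders, hba1, if_neg hB.ne', Finset.mem_filter,
      Finset.mem_univ, true_and, Finset.mem_insert, halw]
    constructor
    · rintro (h | h)
      · exact Or.inl h
      · by_cases hp : p ∈ T
        · exact Or.inr hp
        · simp [hp] at h
    · rintro (h | h)
      · exact Or.inl h
      · right; simpa [h] using hB
  have hcard1 : (spenders ω q a1).card = k := by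
    rw [hsp1, Finset.card_insert_of_notMem hT1, hTcard]; omega
  have hspo : ∀ a : A, a ≠ a1 → spenders ω q a = {ω a} := by
    intro a ha
    have : q.bal a = 0 := by rw [hqbal']; exact hbal0 a ha
    simp [spenders, this]
  have hqS : q ∈ Sset ω k := by
    refine ⟨a1, hcard1, ?_, Or.inr ?_⟩
    · rw [hba1]; exact hB
    · intro p hp p' hp' hne
      have hpT : p ∈ T := by
        rcases Finset.mem_sdiff.1 hp with ⟨hmem, hnot⟩
        rw [hsp1] at hmem
        rcases Finset.mem_insert.1 hmem with h | h
        · exact absurd (Finset.mem_singleton.2 h) hnot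
        · exact h
      have hpT' : p' ∈ T := by
        rcases Finset.mem_sdiff.1 hp' with ⟨hmem, hnot⟩
        rw [hsp1] at hmem
        rcases Finset.mem_insert.1 hmem with h | h
        · exact absurd (Finset.mem_singleton.2 h) hnot
        · exact h
      rw [hba1, halw p, halw p', if_pos hpT, if_pos hpT']
      omega
  have hqQ : q ∈ Qset ω k := by
    apply le_antisymm
    · apply Finset.sup_le
      intro a _
      by_cases ha : a = a1
      · subst ha; rw [hcard1]
      · rw [hspo a ha]; simpa using hk1
    · calc k = (spenders ω q a1).card := hcard1.symm
        _ ≤ _ := Finset.le_sup (f := fun a => (spenders ω q a).card) (Finset.mem_univ a1)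
  refine ⟨⟨ℓ, ?_, hqS, hqQ⟩, ⟨q, hqS⟩, ⟨q, hqQ⟩⟩
  simp [hℓ, hL, hTcard]
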